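/- Let q be a prime power with 3 | (q−1), and let n be a prime with n ≠ 2, n | (q+1) and 3 | (n−1). Fix λ ∈ 𝔽_{q²} of multiplicative order n and A, B ∈ 𝔽_{q²} with A^{q+1} = B^{q+1} = 1. Then there is an integer i such that the projectivities α : (X:Y:Z) ↦ (λX : λ^i Y : Z) and β : (X:Y:Z) ↦ (AY : BZ : X) of PGL(3, 𝔽_{q²}) both map the Fermat curve X^{q+1} + Y^{q+1} + Z^{q+1} = 0 onto itself, α has order n, β has order 3, β normalizes ⟨α⟩ without centralizing it, and G = ⟨α, β⟩ is a nonabelian group of order 3n isomorphic to a nontrivial semidirect product C_n ⋊ C_3. -/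

import Mathlib

/-- The Fermat (Hermitian) polynomial `X^(q+1) + Y^(q+1) + Z^(q+1)` evaluated at a vector. -/
def fermatEval (q : ℕ) {K : Type} [Field K] (v : Fin 3 → K) : K :=
  v 0 ^ (q + 1) + v 1 ^ (q + 1) + v 2 ^ (q + 1)

/-- The action of a matrix with entries in `F` on vectors over an extension `K`. -/
def applyMat {F K : Type} [Field F] [Field K] [Algebra F K]
    (g : Matrix (Fin 3) (Fin 3) F) (v : Fin 3 → K) : Fin 3 → K :=
  (g.map (algebraMap F K)).mulVec v

/-- Power map hom from `Multiplicative (ZMod m)` into a group, given `g ^ m = 1`. -/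
def zmodPowHom (m : ℕ) [NeZero m] {G : Type*} [Group G] (g : G) (hg : g ^ m = 1) :
    Multiplicative (ZMod m) →* G where
  toFun x := g ^ (x.toAdd.val)
  map_one' := by simp [toAdd_one, ZMod.val_zero]
  map_mul' x y := by
    have key : ∀ c : ℕ, g ^ (c % m) = g ^ c := by
      intro c
      conv_rhs => rw [← Nat.div_add_mod c m]
      rw [pow_add, pow_mul, hg, one_pow, one_mul]
    simp only [toAdd_mul, ZMod.val_add, key, pow_add]

@[simp] theorem zmodPowHom_apply (m : ℕ) [NeZero m] {G : Type*} [Group G] (g : G)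
    (hg : g ^ m = 1) (x : Multiplicative (ZMod m)) :
    zmodPowHom m g hg x = g ^ (x.toAdd.val) := rfl

/-- Multiplication by a unit as an automorphism of `Multiplicative (ZMod m)`. -/
def mulAutOfUnit {m : ℕ} (u : (ZMod m)ˣ) : MulAut (Multiplicative (ZMod m)) where
  toFun x := Multiplicative.ofAdd ((u : ZMod m) * x.toAdd)
  invFun x := Multiplicative.ofAdd (((u⁻¹ : (ZMod m)ˣ) : ZMod m) * x.toAdd)
  left_inv x := by simp [← mul_assoc]
  right_inv x := by simp [← mul_assoc]
  map_mul' x y := by simp [mul_add]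

@[simp] theorem mulAutOfUnit_apply {m : ℕ} (u : (ZMod m)ˣ) (x : Multiplicative (ZMod m)) :
    mulAutOfUnit u x = Multiplicative.ofAdd ((u : ZMod m) * x.toAdd) := rfl

theorem mulAutOfUnit_mul {m : ℕ} (u v : (ZMod m)ˣ) :
    mulAutOfUnit (u * v) = mulAutOfUnit u * mulAutOfUnit v := by
  ext x
  simp [mulAutOfUnit, mul_assoc]

theorem smul_one_fin_three {F : Type*} [Field F] (c : F) :
    c • (1 : Matrix (Fin 3) (Fin 3) F) = !![c, 0, 0; 0, c, 0; 0, 0, c] := by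
  rw [Matrix.one_fin_three]
  ext i j
  fin_cases i <;> fin_cases j <;> simp [Matrix.vecHead, Matrix.vecTail]

theorem smul_fin_three {F : Type*} [Field F] (c a₁ a₂ a₃ b₁ b₂ b₃ c₁ c₂ c₃ : F) :
    c • !![a₁,a₂,a₃;b₁,b₂,b₃;c₁,c₂,c₃]
      = !![c*a₁,c*a₂,c*a₃;c*b₁,c*b₂,c*b₃;c*c₁,c*c₂,c*c₃] := by
  ext i j
  fin_cases i <;> fin_cases j <;> simp [Matrix.vecHead, Matrix.vecTail]

/-- The equivalence of a semidirect product with the product type. -/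
def sdpEquivProd {N G : Type*} [Group N] [Group G] (φ : G →* MulAut N) :
    SemidirectProduct N G φ ≃ N × G where
  toFun x := (x.left, x.right)
  invFun p := ⟨p.1, p.2⟩
  left_inv _ := rfl
  right_inv _ := rfl

theorem aux_sdp {G : Type} [Group G] (n : ℕ) (hn : n.Prime) (hn3 : n ≠ 3)
    (τ : (ZMod n)ˣ) (hτ : orderOf τ = 3) (k : ℕ) (hkcast : ((k : ℕ) : ZMod n) = (τ : ZMod n))
    (α β : G) (hαn : α ^ n = 1) (hβ3 : β ^ 3 = 1)
    (horda : orderOf α = n) (hordb : orderOf β = 3)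
    (hconj : β * α * β⁻¹ = α ^ k) :
    Nat.card (Subgroup.closure {α, β}) = 3 * n ∧
    ∃ φ : Multiplicative (ZMod 3) →* MulAut (Multiplicative (ZMod n)),
      φ ≠ 1 ∧
      Nonempty ((Subgroup.closure {α, β}) ≃*
        SemidirectProduct (Multiplicative (ZMod n)) (Multiplicative (ZMod 3)) φ) := by
  haveI : Fact n.Prime := ⟨hn⟩
  haveI : NeZero n := ⟨hn.pos.ne'⟩
  haveI : Fact (1 < n) := ⟨hn.one_lt⟩
  haveI : Fact (1 < 3) := ⟨by norm_num⟩
  set t : ZMod n := (τ : ZMod n) with htdef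
  have hτ3 : τ ^ 3 = 1 := by rw [← hτ]; exact pow_orderOf_eq_one τ
  have ht1 : t ≠ 1 := by
    intro h1
    have : τ = 1 := Units.ext h1
    rw [this, orderOf_one] at hτ
    omega
  have hpow_eq : ∀ m₁ m₂ : ℕ, ((m₁ : ZMod n) = (m₂ : ZMod n)) → α ^ m₁ = α ^ m₂ := by
    intro m₁ m₂ hm
    rw [pow_eq_pow_iff_modEq, horda]
    exact (ZMod.natCast_eq_natCast_iff _ _ _).mp hm
  have hconj_pow : ∀ m : ℕ, β * α ^ m * β⁻¹ = α ^ (k * m) := by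
    intro m
    rw [← conj_pow, hconj, ← pow_mul, mul_comm k m]
  have hconj_powj : ∀ j m : ℕ, β ^ j * α ^ m * (β ^ j)⁻¹ = α ^ (k ^ j * m) := by
    intro j
    induction j with
    | zero => intro m; simp
    | succ j ih =>
      intro m
      have hstep : β ^ (j + 1) * α ^ m * (β ^ (j + 1))⁻¹
          = β ^ j * (β * α ^ m * β⁻¹) * (β ^ j)⁻¹ := by
        rw [pow_succ]
        group
      rw [hstep, hconj_pow m, ih (k * m), show k ^ j * (k * m) = k ^ (j + 1) * m by ring]
  set e : (ZMod n)ˣ →* MulAut (Multiplicative (ZMod n)) :=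
    MonoidHom.mk' mulAutOfUnit mulAutOfUnit_mul with hedef
  set φ : Multiplicative (ZMod 3) →* MulAut (Multiplicative (ZMod n)) :=
    e.comp (zmodPowHom 3 τ hτ3) with hφdef
  have hφapp : ∀ (c : Multiplicative (ZMod 3)) (x : Multiplicative (ZMod n)),
      φ c x = Multiplicative.ofAdd ((t ^ c.toAdd.val) * x.toAdd) := by
    intro c x
    simp [hφdef, hedef, htdef, Units.val_pow_eq_pow_val]
  have hφne : φ ≠ 1 := by
    intro h1
    apply ht1
    have h0 := congrArg (fun ψ : Multiplicative (ZMod 3) →* MulAut (Multiplicative (ZMod n)) =>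
      (ψ (Multiplicative.ofAdd 1) (Multiplicative.ofAdd 1))) h1
    simp only [hφapp] at h0
    have h2 : (t ^ (Multiplicative.ofAdd (1 : ZMod 3)).toAdd.val) * (1 : ZMod n) = 1 := by
      simpa using h0
    rwa [toAdd_ofAdd, ZMod.val_one, pow_one, mul_one] at h2
  set fn : Multiplicative (ZMod n) →* G := zmodPowHom n α hαn with hfndef
  set fh : Multiplicative (ZMod 3) →* G := zmodPowHom 3 β hβ3 with hfhdef
  have hcomp : ∀ g : Multiplicative (ZMod 3),
      fn.comp (φ g).toMonoidHom = (MulAut.conj (fh g)).toMonoidHom.comp fn := by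
    intro c
    refine MonoidHom.ext fun x => ?_
    simp only [MonoidHom.comp_apply, MulEquiv.coe_toMonoidHom, MulAut.conj_apply,
      hfndef, hfhdef, zmodPowHom_apply, hφapp]
    rw [hconj_powj]
    apply hpow_eq
    push_cast
    rw [hkcast, ZMod.natCast_val, ZMod.cast_id, ZMod.natCast_val, ZMod.cast_id, toAdd_ofAdd]
  set Φ := SemidirectProduct.lift fn fh hcomp with hΦdef
  have hΦapp : ∀ x, Φ x = α ^ (x.left.toAdd.val) * β ^ (x.right.toAdd.val) := fun _ => rfl
  have hcop : Nat.Coprime 3 n :=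
    (Nat.coprime_primes (by norm_num) hn).mpr (fun h' => hn3 h'.symm)
  have hΦinj : Function.Injective Φ := by
    rw [injective_iff_map_eq_one]
    intro x hx
    rw [hΦapp] at hx
    set xl := x.left.toAdd.val with hxl
    set xr := x.right.toAdd.val with hxr
    have hbr : β ^ xr = (α ^ xl)⁻¹ := eq_inv_of_mul_eq_one_right hx
    have hd3 : orderOf (β ^ xr) ∣ 3 := orderOf_dvd_of_pow_eq_one (by
      rw [← pow_mul, mul_comm, pow_mul, hβ3, one_pow])
    have hdn : orderOf (β ^ xr) ∣ n := orderOf_dvd_of_pow_eq_one (by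
      rw [hbr, inv_pow, ← pow_mul, mul_comm, pow_mul, hαn, one_pow, inv_one])
    have h1 : orderOf (β ^ xr) = 1 := Nat.eq_one_of_dvd_coprimes hcop hd3 hdn
    have hβxr : β ^ xr = 1 := orderOf_eq_one_iff.mp h1
    have hxr0 : xr = 0 := by
      have h3d : (3 : ℕ) ∣ xr := by
        rw [← hordb]; exact orderOf_dvd_of_pow_eq_one hβxr
      have : xr < 3 := x.right.toAdd.val_lt
      omega
    have hαxl : α ^ xl = 1 := by
      rw [hβxr, mul_one] at hx
      exact hx
    have hxl0 : xl = 0 := by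
      have hnd : n ∣ xl := by
        rw [← horda]; exact orderOf_dvd_of_pow_eq_one hαxl
      exact Nat.eq_zero_of_dvd_of_lt hnd x.left.toAdd.val_lt
    have hl : x.left = 1 := by
      have : x.left.toAdd = 0 := (ZMod.val_eq_zero _).mp hxl0
      rw [← ofAdd_toAdd x.left, this, ofAdd_zero]
    have hr : x.right = 1 := by
      have : x.right.toAdd = 0 := (ZMod.val_eq_zero _).mp hxr0
      rw [← ofAdd_toAdd x.right, this, ofAdd_zero]
    ext
    · rw [hl]; rfl
    · rw [hr]; rfl
  have hα_mem_range : α ∈ Φ.range := by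
    refine ⟨SemidirectProduct.inl (Multiplicative.ofAdd 1), ?_⟩
    rw [hΦapp]
    simp [ZMod.val_one]
  have hβ_mem_range : β ∈ Φ.range := by
    refine ⟨SemidirectProduct.inr (Multiplicative.ofAdd 1), ?_⟩
    rw [hΦapp]
    simp [ZMod.val_one]
  have hrange : Subgroup.closure {α, β} = Φ.range := by
    apply le_antisymm
    · rw [Subgroup.closure_le]
      rintro x (rfl | rfl)
      · exact hα_mem_range
      · exact hβ_mem_range
    · rintro x ⟨y, rfl⟩
      rw [hΦapp]
      exact mul_mem
        (pow_mem (Subgroup.subset_closure (by simp)) _)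
        (pow_mem (Subgroup.subset_closure (by simp)) _)
  have hequiv : (Subgroup.closure {α, β}) ≃*
      SemidirectProduct (Multiplicative (ZMod n)) (Multiplicative (ZMod 3)) φ :=
    (MulEquiv.subgroupCongr hrange).trans (MonoidHom.ofInjective hΦinj).symm
  have hcard : Nat.card (Subgroup.closure {α, β}) = 3 * n := by
    rw [Nat.card_congr hequiv.toEquiv, Nat.card_congr (sdpEquivProd φ), Nat.card_prod,
      Nat.card_congr (Multiplicative.toAdd (α := ZMod n)),
      Nat.card_congr (Multiplicative.toAdd (α := ZMod 3)), Nat.card_zmod, Nat.card_zmod,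
      mul_comm]
  exact ⟨hcard, φ, hφne, ⟨hequiv⟩⟩

/-- Let `q` be a prime power with `3 ∣ q-1`, `n ≠ 2` a prime with
`n ∣ q+1` and `3 ∣ n-1`.  Fix `λ ∈ 𝔽_{q²}` of order `n` and `A, B` with
`A^(q+1) = B^(q+1) = 1`.  Then there is `i` such that the projectivities
`α : (X:Y:Z) ↦ (λX : λ^i Y : Z)` and `β : (X:Y:Z) ↦ (AY : BZ : X)` both preserve the
Fermat curve `X^(q+1)+Y^(q+1)+Z^(q+1) = 0`, `α` has order `n`, `β` has order `3`,
`β` normalizes `⟨α⟩` without centralizing it, and `G = ⟨α,β⟩` is a nonabelian group of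
order `3n` isomorphic to a nontrivial semidirect product `C_n ⋊ C_3`. -/
theorem stmt_11 (p : ℕ) (hp : p.Prime) (h : ℕ) (hh : 1 ≤ h) (q : ℕ) (hq : q = p ^ h)
    (n : ℕ) (hn : n.Prime) (hn2 : n ≠ 2) (hnq : n ∣ q + 1) (h3n : 3 ∣ n - 1)
    (h3q : 3 ∣ q - 1)
    (F : Type) [Field F] [Fintype F] (hF : Fintype.card F = q ^ 2)
    (K : Type) [Field K] [IsAlgClosed K] [Algebra F K]
    (lam : F) (hlam : orderOf lam = n)
    (A B : F) (hA : A ^ (q + 1) = 1) (hB : B ^ (q + 1) = 1)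
    (b : Matrix.GeneralLinearGroup (Fin 3) F)
    (hbmat : (b : Matrix (Fin 3) (Fin 3) F) = !![0, A, 0; 0, 0, B; 1, 0, 0]) :
    ∃ (i : ℕ) (a : Matrix.GeneralLinearGroup (Fin 3) F),
      (a : Matrix (Fin 3) (Fin 3) F) = !![lam, 0, 0; 0, lam ^ i, 0; 0, 0, 1] ∧
      (∀ g ∈ ({a, b} : Set (Matrix.GeneralLinearGroup (Fin 3) F)),
        ∀ v : Fin 3 → K, v ≠ 0 →
          (fermatEval q v = 0 ↔ fermatEval q (applyMat (g : Matrix (Fin 3) (Fin 3) F) v) = 0)) ∧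
      (let α : Matrix.GeneralLinearGroup (Fin 3) F ⧸
          Subgroup.center (Matrix.GeneralLinearGroup (Fin 3) F) := QuotientGroup.mk a
       let β : Matrix.GeneralLinearGroup (Fin 3) F ⧸
          Subgroup.center (Matrix.GeneralLinearGroup (Fin 3) F) := QuotientGroup.mk b
       orderOf α = n ∧ orderOf β = 3 ∧
        β * α * β⁻¹ ∈ Subgroup.zpowers α ∧ β * α ≠ α * β ∧
        (¬ ∀ x ∈ Subgroup.closure {α, β}, ∀ y ∈ Subgroup.closure {α, β}, x * y = y * x) ∧
        Nat.card (Subgroup.closure {α, β}) = 3 * n ∧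
        ∃ φ : Multiplicative (ZMod 3) →* MulAut (Multiplicative (ZMod n)),
          φ ≠ 1 ∧
          Nonempty ((Subgroup.closure {α, β}) ≃*
            SemidirectProduct (Multiplicative (ZMod n)) (Multiplicative (ZMod 3)) φ)) := by
  haveI : Fact n.Prime := ⟨hn⟩
  haveI : Fact (Nat.Prime 3) := ⟨by norm_num⟩
  haveI : NeZero n := ⟨hn.pos.ne'⟩
  haveI : Fact (1 < n) := ⟨hn.one_lt⟩
  haveI : Fact (1 < 3) := ⟨by norm_num⟩
  have hn3 : n ≠ 3 := by
    rintro rfl; omega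
  -- an element of order 3 in (ZMod n)ˣ
  obtain ⟨τ, hτ⟩ : ∃ τ : (ZMod n)ˣ, orderOf τ = 3 := by
    apply exists_prime_orderOf_dvd_card 3
    rw [ZMod.card_units n]
    exact h3n
  set t : ZMod n := (τ : ZMod n) with htdef
  have hτ3 : τ ^ 3 = 1 := by rw [← hτ]; exact pow_orderOf_eq_one τ
  have ht3 : t ^ 3 = 1 := by
    have := congrArg (Units.val) hτ3
    simpa using this
  have ht1 : t ≠ 1 := by
    intro h1
    have : τ = 1 := Units.ext h1
    rw [this, orderOf_one] at hτ; omega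
  have ht0 : t ≠ 0 := τ.ne_zero
  have hquad : t ^ 2 + t + 1 = 0 := by
    have hfac : (t - 1) * (t ^ 2 + t + 1) = 0 := by
      have : (t - 1) * (t ^ 2 + t + 1) = t ^ 3 - 1 := by ring
      rw [this, ht3, sub_self]
    rcases mul_eq_zero.mp hfac with h' | h'
    · exact absurd (by linear_combination h') ht1
    · exact h'
  set k : ℕ := t.val with hkdef
  set i : ℕ := k + 1 with hidef
  have hkcast : ((k : ℕ) : ZMod n) = t := by
    rw [hkdef, ZMod.natCast_val, ZMod.cast_id]
  have hk_lt : k < n := t.val_lt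
  have hk_ne : k ≠ 0 := by
    intro h0
    apply ht0
    rw [← hkcast, h0, Nat.cast_zero]
  -- facts about lam
  have hlam_n : lam ^ n = 1 := by rw [← hlam]; exact pow_orderOf_eq_one lam
  have hlam_ne : lam ≠ 0 := by
    intro h0
    rw [h0] at hlam_n
    simp [zero_pow hn.pos.ne'] at hlam_n
  have hlamq : lam ^ (q + 1) = 1 := by
    have := orderOf_dvd_iff_pow_eq_one.mp (hlam ▸ hnq)
    exact this
  have hlamiq : (lam ^ i) ^ (q + 1) = 1 := by
    rw [← pow_mul, mul_comm, pow_mul, hlamq, one_pow]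
  have hik : n ∣ i * k + 1 := by
    have hcast : ((i * k + 1 : ℕ) : ZMod n) = 0 := by
      push_cast [hidef]
      rw [hkcast]
      linear_combination hquad
    exact (ZMod.natCast_eq_zero_iff _ _).mp hcast
  have hlamik : lam * lam ^ (i * k) = 1 := by
    rw [mul_comm, ← pow_succ]
    exact orderOf_dvd_iff_pow_eq_one.mp (hlam ▸ hik)
  have hA0 : A ≠ 0 := by
    intro h0; rw [h0, zero_pow (by omega : q + 1 ≠ 0)] at hA; exact zero_ne_one hA
  have hB0 : B ≠ 0 := by
    intro h0; rw [h0, zero_pow (by omega : q + 1 ≠ 0)] at hB; exact zero_ne_one hB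
  -- the matrix a
  set aM : Matrix (Fin 3) (Fin 3) F := !![lam, 0, 0; 0, lam ^ i, 0; 0, 0, 1] with haM
  set aInv : Matrix (Fin 3) (Fin 3) F := !![lam⁻¹, 0, 0; 0, (lam ^ i)⁻¹, 0; 0, 0, 1] with haInv
  have hlami_ne : lam ^ i ≠ 0 := pow_ne_zero _ hlam_ne
  have hmul1 : aM * aInv = 1 := by
    rw [haM, haInv]
    rw [Matrix.mul_fin_three, Matrix.one_fin_three]
    simp [mul_inv_cancel₀ hlam_ne, mul_inv_cancel₀ hlami_ne]
  have hmul2 : aInv * aM = 1 := by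
    rw [haM, haInv]
    rw [Matrix.mul_fin_three, Matrix.one_fin_three]
    simp [inv_mul_cancel₀ hlam_ne, inv_mul_cancel₀ hlami_ne]
  set a : Matrix.GeneralLinearGroup (Fin 3) F := ⟨aM, aInv, hmul1, hmul2⟩ with hadef
  have haval : (a : Matrix (Fin 3) (Fin 3) F) = aM := rfl
  refine ⟨i, a, rfl, ?_, ?_⟩
  · -- Fermat curve preservation
    intro g hg v hv
    have key : fermatEval q (applyMat (g : Matrix (Fin 3) (Fin 3) F) v) = fermatEval q v := by
      rcases hg with rfl | hgb
      · rw [haval, haM]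
        simp [fermatEval, applyMat, Matrix.mulVec, dotProduct,
          Fin.sum_univ_three]
        simp [← map_pow, hlamiq, hlamq, mul_pow]
      · rw [Set.mem_singleton_iff.mp hgb, hbmat]
        simp [fermatEval, applyMat, Matrix.mulVec, dotProduct,
          Fin.sum_univ_three]
        simp [← map_pow, hA, hB, mul_pow]
        ring
    rw [key]
  · -- group-theoretic part
    -- powers of a
    have haMpow : ∀ m : ℕ, ((a ^ m : Matrix.GeneralLinearGroup (Fin 3) F) :
        Matrix (Fin 3) (Fin 3) F) = !![lam ^ m, 0, 0; 0, lam ^ (i * m), 0; 0, 0, 1] := by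
      intro m
      induction m with
      | zero => simp [Matrix.one_fin_three]
      | succ m ih =>
        rw [pow_succ, Units.val_mul, ih, haval, haM, Matrix.mul_fin_three,
          show i * (m + 1) = i * m + i by ring]
        simp [pow_succ, pow_add]
    have hin1 : lam ^ (i * n) = 1 := by rw [mul_comm, pow_mul, hlam_n, one_pow]
    have han : a ^ n = 1 := by
      apply Units.ext
      rw [haMpow n, hlam_n, hin1, Units.val_one, Matrix.one_fin_three]
    -- scalar central units
    have hsc : ∀ (c : F), c ≠ 0 → ∃ u : Matrix.GeneralLinearGroup (Fin 3) F,
        (u : Matrix (Fin 3) (Fin 3) F) = c • 1 ∧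
        u ∈ Subgroup.center (Matrix.GeneralLinearGroup (Fin 3) F) := by
      intro c hc
      refine ⟨⟨c • 1, c⁻¹ • 1, ?_, ?_⟩, rfl, ?_⟩
      · rw [Matrix.smul_mul, Matrix.mul_smul, smul_smul, mul_inv_cancel₀ hc, one_mul, one_smul]
      · rw [Matrix.smul_mul, Matrix.mul_smul, smul_smul, inv_mul_cancel₀ hc, one_mul, one_smul]
      · rw [Subgroup.mem_center_iff]
        intro g
        apply Units.ext
        show (g : Matrix (Fin 3) (Fin 3) F) * (c • 1) = (c • 1) * (g : Matrix (Fin 3) (Fin 3) F)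
        rw [Matrix.smul_mul, Matrix.mul_smul, one_mul, mul_one]
    obtain ⟨cl, hcl, hclc⟩ := hsc lam hlam_ne
    obtain ⟨cab, hcab, hcabc⟩ := hsc (A * B) (mul_ne_zero hA0 hB0)
    have hb3 : b ^ 3 = cab := by
      apply Units.ext
      rw [Units.val_pow_eq_pow_val, hbmat, hcab, smul_one_fin_three,
        pow_succ, pow_succ, pow_one, Matrix.mul_fin_three, Matrix.mul_fin_three]
      ext i' j'
      fin_cases i' <;> fin_cases j' <;>
        simp [Matrix.vecHead, Matrix.vecTail, mul_comm]
    have hone : lam * lam ^ k * lam ^ k ^ 2 = 1 := by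
      have h' : lam ^ (i * k + 1) = 1 := by
        rw [pow_succ, mul_comm]
        exact hlamik
      calc lam * lam ^ k * lam ^ k ^ 2 = lam ^ (i * k + 1) := by rw [hidef]; ring
        _ = 1 := h'
    -- key relation:  b * a = cl * (a ^ k * b)
    have hrel : b * a = cl * (a ^ k * b) := by
      apply Units.ext
      rw [Units.val_mul, Units.val_mul, Units.val_mul, haMpow k, hcl, hbmat, haval, haM,
        Matrix.smul_mul, one_mul, Matrix.mul_fin_three, Matrix.mul_fin_three, smul_fin_three]
      ext i' j'
      fin_cases i' <;> fin_cases j' <;>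
        simp [Matrix.vecHead, Matrix.vecTail, hidef, pow_succ] <;>
        first
          | ring1
          | rw [hone, one_mul]
          | linear_combination B * hone
          | linear_combination (-B) * hone
    -- non-commutation at the matrix level
    have hbane : b * a ≠ a * b := by
      intro hcomm
      have hmm : ((b * a : Matrix.GeneralLinearGroup (Fin 3) F) : Matrix (Fin 3) (Fin 3) F)
          = ((a * b : Matrix.GeneralLinearGroup (Fin 3) F) : Matrix (Fin 3) (Fin 3) F) := by
        rw [hcomm]
      rw [Units.val_mul, Units.val_mul, hbmat, haval, haM] at hmm
      have h01 := congrFun (congrFun hmm 0) 1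
      simp [Matrix.mul_apply, Fin.sum_univ_three] at h01
      -- h01 : A * lam ^ i = lam * A (up to normalization)
      rw [mul_comm lam A] at h01
      have h2' : lam ^ i = lam := mul_left_cancel₀ hA0 h01
      rw [hidef, pow_succ] at h2'
      have h2 : lam ^ k = 1 :=
        mul_right_cancel₀ hlam_ne (h2'.trans (one_mul lam).symm)
      have h4 : n ∣ k := by rw [← hlam]; exact orderOf_dvd_of_pow_eq_one h2
      exact hk_ne (Nat.eq_zero_of_dvd_of_lt h4 hk_lt)
    -- now pass to the quotient
    intro α β
    have hmka : α = QuotientGroup.mk a := rfl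
    have hmkb : β = QuotientGroup.mk b := rfl
    clear_value α β
    have hαn : α ^ n = 1 := by
      rw [hmka, ← QuotientGroup.mk_pow, han]
      rfl
    have hβ3 : β ^ 3 = 1 := by
      rw [hmkb, ← QuotientGroup.mk_pow, hb3]
      exact (QuotientGroup.eq_one_iff cab).mpr hcabc
    have hαne : α ≠ 1 := by
      intro h1
      rw [hmka, QuotientGroup.eq_one_iff] at h1
      exact hbane (Subgroup.mem_center_iff.mp h1 b)
    have hβne : β ≠ 1 := by
      intro h1
      rw [hmkb, QuotientGroup.eq_one_iff] at h1
      exact hbane ((Subgroup.mem_center_iff.mp h1 a).symm)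
    have horda : orderOf α = n := orderOf_eq_prime hαn hαne
    have hordb : orderOf β = 3 := orderOf_eq_prime hβ3 hβne
    -- conjugation relation in the quotient
    have hrelQ : β * α = α ^ k * β := by
      rw [hmka, hmkb, ← QuotientGroup.mk_mul, hrel, QuotientGroup.mk_mul,
        QuotientGroup.mk_mul, QuotientGroup.mk_pow,
        (QuotientGroup.eq_one_iff cl).mpr hclc, one_mul]
    have hconj : β * α * β⁻¹ = α ^ k := by
      rw [hrelQ, mul_inv_cancel_right]
    have hpow_eq : ∀ m₁ m₂ : ℕ, ((m₁ : ZMod n) = (m₂ : ZMod n)) → α ^ m₁ = α ^ m₂ := by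
      intro m₁ m₂ hm
      rw [pow_eq_pow_iff_modEq, horda]
      exact (ZMod.natCast_eq_natCast_iff _ _ _).mp hm
    have hconj_pow : ∀ m : ℕ, β * α ^ m * β⁻¹ = α ^ (k * m) := by
      intro m
      rw [← conj_pow, hconj, ← pow_mul, mul_comm k m]
    have hconj_powj : ∀ j m : ℕ, β ^ j * α ^ m * (β ^ j)⁻¹ = α ^ (k ^ j * m) := by
      intro j
      induction j with
      | zero => intro m; simp
      | succ j ih =>
        intro m
        have : β ^ (j + 1) * α ^ m * (β ^ (j + 1))⁻¹
            = β ^ j * (β * α ^ m * β⁻¹) * (β ^ j)⁻¹ := by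
          rw [pow_succ]
          group
        rw [this, hconj_pow m, ih (k * m), show k ^ j * (k * m) = k ^ (j + 1) * m by ring]
    -- noncommutativity in the quotient
    have hba_ne : β * α ≠ α * β := by
      intro heq
      have : α ^ k = α ^ 1 := by
        rw [pow_one, ← hconj, heq, mul_inv_cancel_right]
      have hmod : k ≡ 1 [MOD n] := by
        have := pow_eq_pow_iff_modEq.mp this
        rwa [horda] at this
      have hk1 : k = 1 := by
        have h1 : k % n = 1 % n := hmod
        rwa [Nat.mod_eq_of_lt hk_lt, Nat.mod_eq_of_lt hn.one_lt] at h1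
      apply ht1
      rw [← hkcast, hk1, Nat.cast_one]
    obtain ⟨hcard, φ, hφne, hequiv⟩ :=
      aux_sdp n hn hn3 τ hτ k hkcast α β hαn hβ3 horda hordb hconj
    refine ⟨horda, hordb, ?_, hba_ne, ?_, hcard, φ, hφne, hequiv⟩
    · rw [hconj]
      exact Subgroup.pow_mem _ (Subgroup.mem_zpowers α) k
    · intro hall
      exact hba_ne (hall β (Subgroup.subset_closure (by simp)) α
        (Subgroup.subset_closure (by simp)))
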